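/- Let m ≥ 3, n ≥ 2 and k ≥ 1, and write λ = 2k. Let N^b(m,r) denote the number of proper colorings of the signed book graph B^{uv}(m,r) with color set {−k,…,−1,1,…,k}. Then N^b(m,n) = (λ−1)·γ_{m−1}(λ)·N^b(m,n−1) + (−1)^m·λ·(λ−2)·γ_m(λ)^{n−1}. -/

import Mathlib

/-- Vertices of the book graph `B(m,n)`: `Sum.inl false` is `u`, `Sum.inl true` is `v`,
and `Sum.inr (i, j)` is the vertex `u_{j+1}^{i+1}`. -/
abbrev BookVertex (m n : ℕ) := Bool ⊕ (Fin n × Fin (m - 2))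

/-- Adjacency relation of the book graph `B(m,n)`. -/
def bookAdj (m n : ℕ) : BookVertex m n → BookVertex m n → Prop
  | Sum.inl a, Sum.inl b => a ≠ b
  | Sum.inl false, Sum.inr (_, j) => j.val = 0
  | Sum.inl true, Sum.inr (_, j) => j.val = m - 3
  | Sum.inr (_, j), Sum.inl false => j.val = 0
  | Sum.inr (_, j), Sum.inl true => j.val = m - 3
  | Sum.inr (i, j), Sum.inr (i', j') => i = i' ∧ (j.val + 1 = j'.val ∨ j'.val + 1 = j.val)

/-- The signature `σ_l` of `B(m,n)`: exactly the edges `u u_1^1, …, u u_1^l` are negative. -/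
def sigmaL (m n l : ℕ) : BookVertex m n → BookVertex m n → ℤ
  | Sum.inl false, Sum.inr (i, j) => if j.val = 0 ∧ i.val < l then -1 else 1
  | Sum.inr (i, j), Sum.inl false => if j.val = 0 ∧ i.val < l then -1 else 1
  | _, _ => 1

/-- The signature of `B^{uv}(m,n)`: exactly the edge `uv` is negative. -/
def sigmaUV (m n : ℕ) : BookVertex m n → BookVertex m n → ℤ
  | Sum.inl _, Sum.inl _ => -1
  | _, _ => 1

/-- `γ_m(x) = ∑_{i=0}^{m-2} (-1)^i (x-1)^{m-2-i}`. -/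
def gammaP (m : ℕ) (x : ℤ) : ℤ := ∑ i ∈ Finset.range (m - 1), (-1) ^ i * (x - 1) ^ (m - 2 - i)

/-- The number of zero-free proper colorings of the signed book graph `B^{uv}(m,r)`
(only the edge `uv` negative) with color set `{-k, …, -1, 1, …, k}`. -/
noncomputable def NbColUV (m r k : ℕ) : ℕ :=
  Nat.card {c : BookVertex m r → ℤ //
    (∀ x, c x ≠ 0 ∧ |c x| ≤ (k : ℤ)) ∧
    ∀ x y, bookAdj m r x y → c x ≠ sigmaUV m r x y * c y}

-- ------------------------------------------------------------------
-- Auxiliary definitions and lemmas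
-- ------------------------------------------------------------------

lemma gammaP_three (x : ℤ) : gammaP 3 x = x - 2 := by
  simp [gammaP, Finset.sum_range_succ]; ring

lemma gammaP_rec (M : ℕ) (x : ℤ) :
    gammaP (M + 3) x = (x - 1) * gammaP (M + 2) x + (-1) ^ (M + 1) := by
  have h1 : gammaP (M + 3) x = ∑ i ∈ Finset.range (M + 2), (-1)^i * (x-1)^(M+1-i) := rfl
  have h2 : gammaP (M + 2) x = ∑ i ∈ Finset.range (M + 1), (-1)^i * (x-1)^(M-i) := rfl
  rw [h1, h2, Finset.sum_range_succ, Finset.mul_sum]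
  have : ∀ i ∈ Finset.range (M+1), (x-1) * ((-1)^i * (x-1)^(M-i)) = (-1)^i * (x-1)^(M+1-i) := by
    intro i hi
    rw [Finset.mem_range] at hi
    have : M + 1 - i = (M - i) + 1 := by omega
    rw [this, pow_succ]
    ring
  rw [Finset.sum_congr rfl this]
  simp

noncomputable def colorSet (k : ℕ) : Finset ℤ := (Finset.Icc (-(k:ℤ)) (k:ℤ)).erase 0

lemma mem_colorSet {k : ℕ} {x : ℤ} : x ∈ colorSet k ↔ x ≠ 0 ∧ |x| ≤ (k:ℤ) := by
  simp [colorSet, Finset.mem_Icc, abs_le]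

lemma card_colorSet {k : ℕ} (hk : 1 ≤ k) : (colorSet k).card = 2 * k := by
  have h0 : (0:ℤ) ∈ Finset.Icc (-(k:ℤ)) (k:ℤ) := by
    simp [Finset.mem_Icc]
  rw [colorSet, Finset.card_erase_of_mem h0, Int.card_Icc]
  omega

lemma neg_mem_colorSet {k : ℕ} {x : ℤ} (hx : x ∈ colorSet k) : -x ∈ colorSet k := by
  rw [mem_colorSet] at *
  constructor
  · omega
  · rw [abs_neg]; exact hx.2

abbrev Col (k : ℕ) := {x : ℤ // x ∈ colorSet k}

abbrev PageC (k t : ℕ) (a b : ℤ) :=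
  {p : Fin (t+1) → Col k //
    ((p 0 : ℤ) ≠ a) ∧ (∀ j : Fin t, (p j.castSucc : ℤ) ≠ (p j.succ : ℤ)) ∧
      ((p (Fin.last t) : ℤ) ≠ b)}

lemma card_colSub (k : ℕ) (P : ℤ → Prop) [DecidablePred P] :
    Nat.card {x : Col k // P (x:ℤ)} = ((colorSet k).filter P).card := by
  have e : {x : Col k // P (x:ℤ)} ≃ {x : ℤ // x ∈ (colorSet k).filter P} :=
    { toFun := fun x => ⟨x.1.1, by simp [Finset.mem_filter, x.1.2, x.2]⟩
      invFun := fun x => ⟨⟨x.1, (Finset.mem_filter.1 x.2).1⟩, (Finset.mem_filter.1 x.2).2⟩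
      left_inv := fun x => rfl
      right_inv := fun x => rfl }
  rw [Nat.card_congr e, Nat.card_eq_finsetCard]

/-- base case equiv -/
def pageZeroEquiv (k : ℕ) (a b : ℤ) :
    PageC k 0 a b ≃ {x : Col k // (x:ℤ) ≠ a ∧ (x:ℤ) ≠ b} where
  toFun p := ⟨p.1 0, p.2.1, p.2.2.2⟩
  invFun x := ⟨fun _ => x.1, x.2.1, by intro j; exact absurd j.2 (by omega), x.2.2⟩
  left_inv p := by
    apply Subtype.ext
    funext j
    have : j = 0 := Fin.ext (by omega)
    rw [this]
  right_inv x := rfl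

/-- step: fiber equiv -/
def pageFiberEquiv (k t : ℕ) (a b : ℤ) (d : Col k) (hd : (d:ℤ) ≠ b) :
    {p : PageC k (t+1) a b // p.1 (Fin.last (t+1)) = d} ≃ PageC k t a (d:ℤ) where
  toFun p := ⟨fun j => p.1.1 j.castSucc, by
    refine ⟨by simpa using p.1.2.1, fun j => by
      have h := p.1.2.2.1 j.castSucc; rw [Fin.succ_castSucc] at h; exact h, ?_⟩
    have h := p.1.2.2.1 (Fin.last t)
    rw [Fin.succ_last, p.2] at h
    exact h⟩
  invFun q := by
    refine ⟨⟨Fin.snoc q.1 d, ?_, ?_, ?_⟩, ?_⟩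
    · have h0 : (0 : Fin (t+2)) = (0 : Fin (t+1)).castSucc := (Fin.castSucc_zero).symm
      rw [h0, Fin.snoc_castSucc]
      exact q.2.1
    · intro j
      refine Fin.lastCases ?_ ?_ j
      · rw [Fin.succ_last, Fin.snoc_castSucc, Fin.snoc_last]
        exact q.2.2.2
      · intro i
        rw [Fin.succ_castSucc, Fin.snoc_castSucc, Fin.snoc_castSucc]
        exact q.2.2.1 i
    · rw [Fin.snoc_last]
      exact hd
    · dsimp only
      rw [Fin.snoc_last]
  left_inv p := by
    apply Subtype.ext
    apply Subtype.ext
    dsimp only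
    funext j
    refine Fin.lastCases ?_ ?_ j
    · rw [Fin.snoc_last, p.2]
    · intro i
      rw [Fin.snoc_castSucc]
  right_inv q := by
    apply Subtype.ext
    dsimp only
    funext j
    rw [Fin.snoc_castSucc]

lemma pageC_card (k : ℕ) (hk : 1 ≤ k) (t : ℕ) : ∀ {a b : ℤ}, a ∈ colorSet k → b ∈ colorSet k →
    (Nat.card (PageC k t a b) : ℤ) =
      gammaP (t+3) (2*(k:ℤ)) + if a = b then (-1)^t else 0 := by
  induction t with
  | zero =>
    intro a b ha hb
    classical
    rw [Nat.card_congr (pageZeroEquiv k a b), card_colSub k (fun x => x ≠ a ∧ x ≠ b)]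
    have hfe : (colorSet k).filter (fun x => x ≠ a ∧ x ≠ b) = ((colorSet k).erase a).erase b := by
      ext x
      simp only [Finset.mem_filter, Finset.mem_erase]
      tauto
    rw [hfe, gammaP_three]
    by_cases hab : a = b
    · subst hab
      rw [Finset.erase_idem, Finset.card_erase_of_mem ha, card_colorSet hk]
      simp
      omega
    · have hbmem : b ∈ (colorSet k).erase a := Finset.mem_erase.2 ⟨Ne.symm hab, hb⟩
      rw [Finset.card_erase_of_mem hbmem, Finset.card_erase_of_mem ha, card_colorSet hk]
      simp [hab]
      omega
  | succ t ih =>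
    intro a b ha hb
    classical
    have e1 : PageC k (t+1) a b ≃ Σ d : Col k, {p : PageC k (t+1) a b // p.1 (Fin.last (t+1)) = d} :=
      (Equiv.sigmaFiberEquiv (fun p : PageC k (t+1) a b => p.1 (Fin.last (t+1)))).symm
    rw [Nat.card_congr e1, Nat.card_eq_fintype_card, Fintype.card_sigma]
    have hfib : ∀ d : Col k, (Fintype.card {p : PageC k (t+1) a b // p.1 (Fin.last (t+1)) = d} : ℤ)
        = if (d:ℤ) = b then 0 else gammaP (t+3) (2*(k:ℤ)) + if a = (d:ℤ) then (-1)^t else 0 := by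
      intro d
      by_cases hd : (d:ℤ) = b
      · rw [if_pos hd]
        norm_cast
        rw [Fintype.card_eq_zero_iff]
        constructor
        intro p
        exact p.1.2.2.2 (by rw [p.2]; exact hd)
      · rw [if_neg hd, ← Nat.card_eq_fintype_card, Nat.card_congr (pageFiberEquiv k t a b d hd)]
        exact ih ha d.2
    push_cast
    rw [Finset.sum_congr rfl (fun d _ => hfib d)]
    rw [Finset.sum_coe_sort (colorSet k)
      (fun x => if x = b then 0 else gammaP (t+3) (2*(k:ℤ)) + if a = x then (-1)^t else 0)]
    rw [← Finset.sum_erase_add _ _ hb]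
    simp only [eq_self_iff_true, if_true, add_zero]
    have hcong : ∀ x ∈ (colorSet k).erase b,
        (if x = b then 0 else gammaP (t+3) (2*(k:ℤ)) + if a = x then (-1)^t else 0)
          = gammaP (t+3) (2*(k:ℤ)) + if a = x then ((-1:ℤ))^t else 0 := by
      intro x hx
      rw [if_neg (Finset.mem_erase.1 hx).1]
    rw [Finset.sum_congr rfl hcong, Finset.sum_add_distrib, Finset.sum_const,
      Finset.sum_ite_eq, Finset.card_erase_of_mem hb, card_colorSet hk]
    have h1 : (-1:ℤ)^(t+1) = -(-1:ℤ)^t := by rw [pow_succ]; ring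
    have h2 : (-1:ℤ)^(t+1+1) = (-1:ℤ)^t := by rw [pow_succ, h1]; ring
    have h3 : gammaP (t+1+3) (2*(k:ℤ)) = (2*(k:ℤ)-1) * gammaP (t+3) (2*(k:ℤ)) + (-1:ℤ)^(t+1+1) := by
      have h4 := gammaP_rec (t+1) (2*(k:ℤ))
      rw [show t+1+2 = t+3 from rfl] at h4
      exact h4
    rw [h3, h1, h2, nsmul_eq_mul]
    have hc2 : ((2 * k - 1 : ℕ) : ℤ) = 2*(k:ℤ) - 1 := by omega
    rw [hc2]
    by_cases hab : a = b
    · rw [if_neg (by simp [hab]), if_pos hab]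
      ring
    · rw [if_pos (Finset.mem_erase.2 ⟨hab, ha⟩), if_neg hab]
      ring

def bookEquiv (M n k : ℕ) :
    {c : BookVertex (M+3) n → ℤ //
      (∀ x, c x ≠ 0 ∧ |c x| ≤ (k : ℤ)) ∧
      ∀ x y, bookAdj (M+3) n x y → c x ≠ sigmaUV (M+3) n x y * c y} ≃
    Σ p : {p : Col k × Col k // (p.1 : ℤ) ≠ -(p.2 : ℤ)},
      Fin n → PageC k M (p.1.1 : ℤ) (p.1.2 : ℤ) where
  toFun c :=
    ⟨⟨(⟨c.1 (Sum.inl false), mem_colorSet.2 (c.2.1 _)⟩,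
       ⟨c.1 (Sum.inl true), mem_colorSet.2 (c.2.1 _)⟩), by
        have h := c.2.2 (Sum.inl false) (Sum.inl true) (by simp [bookAdj])
        simpa [sigmaUV] using h⟩,
     fun i => ⟨fun j => ⟨c.1 (Sum.inr (i, j)), mem_colorSet.2 (c.2.1 _)⟩, by
        refine ⟨?_, ?_, ?_⟩
        · have h := c.2.2 (Sum.inr (i, (0 : Fin (M+1)))) (Sum.inl false) (by simp [bookAdj])
          simpa [sigmaUV] using h
        · intro j
          have h := c.2.2 (Sum.inr (i, j.castSucc)) (Sum.inr (i, j.succ))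
            (by exact ⟨rfl, Or.inl rfl⟩)
          simpa [sigmaUV] using h
        · have h := c.2.2 (Sum.inr (i, Fin.last M)) (Sum.inl true)
            (by show (Fin.last M).val = M + 3 - 3; simp)
          simpa [sigmaUV] using h⟩⟩
  invFun s :=
    ⟨fun x => match x with
      | Sum.inl false => (s.1.1.1 : ℤ)
      | Sum.inl true => (s.1.1.2 : ℤ)
      | Sum.inr (i, j) => ((s.2 i).1 j : ℤ), by
      constructor
      · intro x
        match x with
        | Sum.inl false => exact mem_colorSet.1 s.1.1.1.2
        | Sum.inl true => exact mem_colorSet.1 s.1.1.2.2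
        | Sum.inr (i, j) => exact mem_colorSet.1 ((s.2 i).1 j).2
      · intro x y hxy
        match x, y with
        | Sum.inl false, Sum.inl false => exact absurd hxy (by simp [bookAdj])
        | Sum.inl true, Sum.inl true => exact absurd hxy (by simp [bookAdj])
        | Sum.inl false, Sum.inl true =>
          simpa [sigmaUV] using s.1.2
        | Sum.inl true, Sum.inl false =>
          have := s.1.2
          simp only [sigmaUV]
          intro e
          apply this
          omega
        | Sum.inl false, Sum.inr (i, j) =>
          have hcol : ((s.2 i).1 j) = ((s.2 i).1 0) := congrArg _ (Fin.ext (by exact hxy))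
          have h5 := (s.2 i).2.1
          simp only [sigmaUV, one_mul]
          rw [hcol]
          exact h5.symm
        | Sum.inr (i, j), Sum.inl false =>
          have hcol : ((s.2 i).1 j) = ((s.2 i).1 0) := congrArg _ (Fin.ext (by exact hxy))
          have h5 := (s.2 i).2.1
          simp only [sigmaUV, one_mul]
          rw [hcol]
          exact h5
        | Sum.inl true, Sum.inr (i, j) =>
          have hcol : ((s.2 i).1 j) = ((s.2 i).1 (Fin.last M)) := congrArg _ (Fin.ext (by exact hxy))
          have h5 := (s.2 i).2.2.2
          simp only [sigmaUV, one_mul]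
          rw [hcol]
          exact h5.symm
        | Sum.inr (i, j), Sum.inl true =>
          have hcol : ((s.2 i).1 j) = ((s.2 i).1 (Fin.last M)) := congrArg _ (Fin.ext (by exact hxy))
          have h5 := (s.2 i).2.2.2
          simp only [sigmaUV, one_mul]
          rw [hcol]
          exact h5
        | Sum.inr (i, j), Sum.inr (i', j') =>
          obtain ⟨hi, hj⟩ := hxy
          subst hi
          rcases hj with hj | hj
          · have hlt : j.val < M := by omega
            have h1 : j = (⟨j.val, hlt⟩ : Fin M).castSucc := Fin.ext rfl
            have h2 : j' = (⟨j.val, hlt⟩ : Fin M).succ := Fin.ext (by simp [Fin.succ]; omega)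
            rw [h1, h2]
            have := (s.2 i).2.2.1 ⟨j.val, hlt⟩
            simpa [sigmaUV] using this
          · have hlt : j'.val < M := by omega
            have h1 : j' = (⟨j'.val, hlt⟩ : Fin M).castSucc := Fin.ext rfl
            have h2 : j = (⟨j'.val, hlt⟩ : Fin M).succ := Fin.ext (by simp [Fin.succ]; omega)
            rw [h1, h2]
            have := (s.2 i).2.2.1 ⟨j'.val, hlt⟩
            simpa [sigmaUV] using this.symm⟩
  left_inv c := by
    apply Subtype.ext
    funext x
    match x with
    | Sum.inl false => rfl
    | Sum.inl true => rfl
    | Sum.inr (i, j) => rfl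
  right_inv s := rfl

lemma nbcol (M n k : ℕ) (hk : 1 ≤ k) :
    (NbColUV (M+3) n k : ℤ) =
      2*(k:ℤ) * (gammaP (M+3) (2*(k:ℤ)) + (-1)^M)^n
        + 2*(k:ℤ)*(2*(k:ℤ)-2) * gammaP (M+3) (2*(k:ℤ))^n := by
  classical
  set γ := gammaP (M+3) (2*(k:ℤ)) with hγ
  rw [NbColUV, Nat.card_congr (bookEquiv M n k), Nat.card_eq_fintype_card, Fintype.card_sigma]
  push_cast
  have hterm : ∀ p : {p : Col k × Col k // (p.1 : ℤ) ≠ -(p.2 : ℤ)},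
      (Fintype.card (Fin n → PageC k M (p.1.1 : ℤ) (p.1.2 : ℤ)) : ℤ)
        = (γ + if (p.1.1 : ℤ) = (p.1.2 : ℤ) then (-1:ℤ)^M else 0)^n := by
    intro p
    rw [Fintype.card_fun, Fintype.card_fin]
    push_cast
    rw [← Nat.card_eq_fintype_card, pageC_card k hk M p.1.1.2 p.1.2.2]
  rw [Finset.sum_congr rfl (fun p _ => hterm p)]
  rw [← Finset.sum_subtype (Finset.univ.filter (fun p : Col k × Col k => (p.1 : ℤ) ≠ -(p.2 : ℤ)))
    (by intro x; simp) (fun q : Col k × Col k => (γ + if (q.1 : ℤ) = (q.2 : ℤ) then (-1:ℤ)^M else 0)^n)]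
  rw [Finset.sum_filter, Fintype.sum_prod_type]
  have hinner : ∀ x : Col k,
      (∑ y : Col k, if (x : ℤ) ≠ -(y : ℤ) then (γ + if (x : ℤ) = (y : ℤ) then (-1:ℤ)^M else 0)^n else 0)
        = (γ + (-1)^M)^n + (2*(k:ℤ)-2) * γ^n := by
    intro x
    rw [Finset.sum_coe_sort (colorSet k)
      (fun z => if (x : ℤ) ≠ -z then (γ + if (x : ℤ) = z then (-1:ℤ)^M else 0)^n else 0)]
    have hxmem := x.2
    have hx0 : (x:ℤ) ≠ 0 := (mem_colorSet.1 x.2).1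
    have hnegmem : -(x:ℤ) ∈ colorSet k := neg_mem_colorSet x.2
    rw [← Finset.sum_erase_add _ _ hnegmem]
    rw [if_neg (by simp)]
    have hxe : (x:ℤ) ∈ (colorSet k).erase (-(x:ℤ)) :=
      Finset.mem_erase.2 ⟨by omega, x.2⟩
    rw [← Finset.sum_erase_add _ _ hxe]
    rw [if_pos (by omega), if_pos rfl]
    have hcong : ∀ z ∈ ((colorSet k).erase (-(x:ℤ))).erase (x:ℤ),
        (if (x : ℤ) ≠ -z then (γ + if (x : ℤ) = z then (-1:ℤ)^M else 0)^n else 0) = γ^n := by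
      intro z hz
      have h1 := (Finset.mem_erase.1 hz).1
      have h2 := (Finset.mem_erase.1 (Finset.mem_erase.1 hz).2).1
      rw [if_pos (by omega), if_neg (by omega), add_zero]
    rw [Finset.sum_congr rfl hcong, Finset.sum_const, Finset.card_erase_of_mem hxe,
      Finset.card_erase_of_mem hnegmem, card_colorSet hk, nsmul_eq_mul, add_zero]
    have : ((2 * k - 1 - 1 : ℕ) : ℤ) = 2*(k:ℤ) - 2 := by omega
    rw [this]
    ring
  rw [Finset.sum_congr rfl (fun x _ => hinner x), Finset.sum_const, Finset.card_univ,
    Fintype.card_coe, card_colorSet hk, nsmul_eq_mul]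
  push_cast
  ring


/-- Recursion for the zero-free chromatic polynomial of `B^{uv}(m,n)`, with `λ = 2k`:
`N^b(m,n) = (λ-1)·γ_{m-1}(λ)·N^b(m,n-1) + (-1)^m·λ(λ-2)·γ_m(λ)^{n-1}`. -/
theorem statement16 (m n : ℕ) (hm : 3 ≤ m) (hn : 2 ≤ n) (k : ℕ) (hk : 1 ≤ k) :
    (NbColUV m n k : ℤ) =
      (2 * (k : ℤ) - 1) * gammaP (m - 1) (2 * (k : ℤ)) * (NbColUV m (n - 1) k : ℤ) +
        (-1) ^ m * (2 * (k : ℤ)) * (2 * (k : ℤ) - 2) * gammaP m (2 * (k : ℤ)) ^ (n - 1) := by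
  obtain ⟨M, rfl⟩ : ∃ M, m = M + 3 := ⟨m - 3, by omega⟩
  obtain ⟨N, rfl⟩ : ∃ N, n = N + 2 := ⟨n - 2, by omega⟩
  have e1 : M + 3 - 1 = M + 2 := rfl
  have e2 : N + 2 - 1 = N + 1 := rfl
  rw [e1, e2, nbcol M (N+2) k hk, nbcol M (N+1) k hk]
  have hsgn : (-1:ℤ)^(M+1) = -(-1:ℤ)^M := by rw [pow_succ]; ring
  have hsgn3 : (-1:ℤ)^(M+3) = -(-1:ℤ)^M := by
    rw [pow_succ, pow_succ, pow_succ]; ring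
  have hkey : (2*(k:ℤ)-1) * gammaP (M+2) (2*(k:ℤ))
      = gammaP (M+3) (2*(k:ℤ)) + (-1)^M := by
    rw [gammaP_rec M (2*(k:ℤ)), hsgn]; ring
  rw [hsgn3]
  set γ := gammaP (M+3) (2*(k:ℤ)) with hγ
  set η := gammaP (M+2) (2*(k:ℤ)) with hη
  set e := ((-1:ℤ))^M with he
  linear_combination -(2*(k:ℤ)*(γ+e)^(N+1) + 2*(k:ℤ)*(2*(k:ℤ)-2)*γ^(N+1)) * hkey
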